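/- For a string T with distinguished end marker (or simply any string T), for every substring S of T, Cov(S) = CovOv(S) + nov(S)·|S|, where Cov(S) is the number of positions of T covered by occurrences of S, CovOv(S) = Σ_{(i,j) ∈ OvOcc(S)} (j - i), and nov(S) is one plus the number of non-overlapping consecutive occurrences of S in T. -/

import Mathlib

/-- `S` occurs in `T` at (0-indexed) position `i`. -/
def occursAt {α : Type*} (T S : List α) (i : ℕ) : Prop :=
  (T.drop i).take S.length = S

/-- `V` is primitive: it is not a proper power. -/
def Primitive {α : Type*} (V : List α) : Prop :=
  ∀ (U : List α) (d : ℕ), 0 < d → V = (List.replicate d U).flatten → d = 1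

/-- `p` is a period of `F`. -/
def IsPeriod {α : Type*} (F : List α) (p : ℕ) : Prop :=
  1 ≤ p ∧ ∀ k, k + p < F.length → F[k]? = F[k + p]?

/-- `p` is the smallest period of `F`. -/
def MinPeriod {α : Type*} (F : List α) (p : ℕ) : Prop :=
  IsPeriod F p ∧ ∀ q, IsPeriod F q → p ≤ q

/-- `(a,b,p)` is a run in `T` (0-indexed, positions `a..b` inclusive). -/
def IsRun {α : Type*} (T : List α) (a b p : ℕ) : Prop :=
  a ≤ b ∧ b < T.length ∧
  MinPeriod ((T.drop a).take (b - a + 1)) p ∧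
  2 * p ≤ b - a + 1 ∧
  (a = 0 ∨ T[a - 1]? ≠ T[a - 1 + p]?) ∧
  (b + 1 = T.length ∨ T[b + 1]? ≠ T[b + 1 - p]?)

/-- `(i,j)` is a consecutive occurrence of `S` in `T`. -/
def ConsOcc {α : Type*} (T S : List α) (i j : ℕ) : Prop :=
  i < j ∧ occursAt T S i ∧ occursAt T S j ∧ ∀ k, i < k → k < j → ¬ occursAt T S k

/-- Overlapping consecutive occurrences of `S` in `T`. -/
def OvOcc {α : Type*} (T S : List α) : Set (ℕ × ℕ) :=
  {q | ConsOcc T S q.1 q.2 ∧ q.2 < q.1 + S.length}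

/-- Non-overlapping consecutive occurrences of `S` in `T`. -/
def NovOcc {α : Type*} (T S : List α) : Set (ℕ × ℕ) :=
  {q | ConsOcc T S q.1 q.2 ∧ q.1 + S.length ≤ q.2}

/-- Positions of `T` covered by occurrences of `S`. -/
def Covered {α : Type*} (T S : List α) : Set ℕ :=
  {k | ∃ i, occursAt T S i ∧ i ≤ k ∧ k < i + S.length}

/-- Number of positions of `T` covered by occurrences of `S`. -/
noncomputable def Cov {α : Type*} (T S : List α) : ℕ := (Covered T S).ncard

/-- Number of occurrences of `S` in `T`. -/
noncomputable def Occ {α : Type*} (T S : List α) : ℕ := {i | occursAt T S i}.ncard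

/-- One plus the number of non-overlapping consecutive occurrences. -/
noncomputable def nov {α : Type*} (T S : List α) : ℕ := 1 + (NovOcc T S).ncard

/-- `S` is right-branching in `T` (end of text acts as a special end marker `none`). -/
def RightBranching {α : Type*} (T S : List α) : Prop :=
  ∃ i j, occursAt T S i ∧ occursAt T S j ∧ T[i + S.length]? ≠ T[j + S.length]?

lemma occursAt_bound {α : Type*} {T S : List α} (hS : S ≠ []) {i : ℕ}
    (h : occursAt T S i) : i + S.length ≤ T.length := by
  have h2 := congrArg List.length h
  simp [List.length_take, List.length_drop] at h2
  have hs : 0 < S.length := List.length_pos_iff.mpr hS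
  omega

lemma mem_zip_tail_iff (l : List ℕ) (hl : l.Pairwise (· < ·)) (i j : ℕ) :
    (i, j) ∈ l.zip l.tail ↔
      i ∈ l ∧ j ∈ l ∧ i < j ∧ ∀ k ∈ l, i < k → k < j → False := by
  induction l with
  | nil => simp
  | cons a t ih =>
    cases t with
    | nil =>
      simp only [List.zip_nil_right, List.tail_cons, List.not_mem_nil, List.mem_singleton]
      constructor
      · intro h; simp at h
      · rintro ⟨rfl, rfl, h, -⟩; omega
    | cons b t' =>
      have hab : a < b := (List.pairwise_cons.mp hl).1 b (by simp)
      have hlt : (b :: t').Pairwise (· < ·) := (List.pairwise_cons.mp hl).2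
      have hble : ∀ x ∈ b :: t', b ≤ x := by
        intro x hx
        rcases List.mem_cons.mp hx with rfl | hx
        · exact le_refl _
        · exact le_of_lt ((List.pairwise_cons.mp hlt).1 x hx)
      have hale : ∀ x ∈ a :: b :: t', a ≤ x := by
        intro x hx
        rcases List.mem_cons.mp hx with rfl | hx
        · exact le_refl _
        · exact le_of_lt ((List.pairwise_cons.mp hl).1 x hx)
      rw [List.tail_cons, List.zip_cons_cons, List.mem_cons]
      constructor
      · rintro (h | h)
        · obtain ⟨rfl, rfl⟩ := Prod.mk.injEq .. ▸ (by exact Prod.mk.inj h : i = a ∧ j = b)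
          refine ⟨by simp, by simp, hab, ?_⟩
          intro k hk h1 h2
          rcases List.mem_cons.mp hk with rfl | hk
          · omega
          · have := hble k hk; omega
        · have h' := (ih hlt).mp (by simpa using h)
          obtain ⟨h1, h2, h3, h4⟩ := h'
          refine ⟨List.mem_cons_of_mem _ h1, List.mem_cons_of_mem _ h2, h3, ?_⟩
          intro k hk hik hkj
          rcases List.mem_cons.mp hk with rfl | hk
          · have := hble i h1; omega
          · exact h4 k hk hik hkj
      · rintro ⟨h1, h2, h3, h4⟩
        rcases List.mem_cons.mp h1 with rfl | h1
        · left
          have hjb : j ∈ b :: t' := by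
            rcases List.mem_cons.mp h2 with rfl | h2
            · omega
            · exact h2
          have hbj : b ≤ j := hble j hjb
          have : ¬ b < j := fun hb => h4 b (by simp) hab hb
          have : j = b := by omega
          simp [this]
        · right
          have hji : b ≤ i := hble i h1
          have hjm : j ∈ b :: t' := by
            rcases List.mem_cons.mp h2 with rfl | h2
            · omega
            · exact h2
          have := (ih hlt).mpr ⟨h1, hjm, h3, fun k hk hik hkj => h4 k (List.mem_cons_of_mem _ hk) hik hkj⟩
          simpa using this

lemma card_biUnion_sorted (s : ℕ) (hs : 1 ≤ s) :
    ∀ l : List ℕ, l.Pairwise (· < ·) → l ≠ [] →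
    (l.toFinset.biUnion (fun i => Finset.Ico i (i + s))).card
      = s + ((l.zip l.tail).map (fun q => min (q.2 - q.1) s)).sum := by
  intro l
  induction l with
  | nil => simp
  | cons a t ih =>
    cases t with
    | nil => intro _ _; simp
    | cons b t' =>
      intro hl _
      have hab : a < b := (List.pairwise_cons.mp hl).1 b (by simp)
      have hlt : (b :: t').Pairwise (· < ·) := (List.pairwise_cons.mp hl).2
      have hble : ∀ x ∈ b :: t', b ≤ x := by
        intro x hx
        rcases List.mem_cons.mp hx with rfl | hx
        · exact le_refl _
        · exact le_of_lt ((List.pairwise_cons.mp hlt).1 x hx)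
      set B := (b :: t').toFinset.biUnion (fun i => Finset.Ico i (i + s)) with hB
      have hBge : ∀ x ∈ B, b ≤ x := by
        intro x hx
        simp only [hB, Finset.mem_biUnion, List.mem_toFinset, Finset.mem_Ico] at hx
        obtain ⟨i, hi, h1, h2⟩ := hx
        have := hble i hi; omega
      have hIH := ih hlt (by simp)
      have hsplit : (a :: b :: t').toFinset.biUnion (fun i => Finset.Ico i (i + s))
          = Finset.Ico a (a + s) ∪ B := by
        simp [hB, Finset.biUnion_insert]
      have hkey := Finset.card_union_add_card_inter (Finset.Ico a (a + s)) B
      rw [hsplit]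
      have hzip : ((a :: b :: t').zip (b :: t')).map (fun q : ℕ × ℕ => min (q.2 - q.1) s)
          = min (b - a) s :: (((b :: t').zip t').map (fun q : ℕ × ℕ => min (q.2 - q.1) s)) := by
        simp [List.zip_cons_cons]
      rw [List.tail_cons, hzip, List.sum_cons]
      by_cases hcase : b < a + s
      · have hinter : Finset.Ico a (a + s) ∩ B = Finset.Ico b (a + s) := by
          ext x
          simp only [Finset.mem_inter, Finset.mem_Ico]
          constructor
          · rintro ⟨⟨h1, h2⟩, hxB⟩
            exact ⟨hBge x hxB, h2⟩
          · rintro ⟨h1, h2⟩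
            refine ⟨⟨by omega, h2⟩, ?_⟩
            simp only [hB, Finset.mem_biUnion, List.mem_toFinset, Finset.mem_Ico]
            exact ⟨b, by simp, h1, by omega⟩
        rw [hinter] at hkey
        simp only [Nat.card_Ico] at hkey
        have hmin : min (b - a) s = b - a := by omega
        rw [List.tail_cons] at hIH
        omega
      · have hinter : Finset.Ico a (a + s) ∩ B = ∅ := by
          ext x
          simp only [Finset.mem_inter, Finset.mem_Ico, Finset.notMem_empty, iff_false]
          rintro ⟨⟨h1, h2⟩, hxB⟩
          have := hBge x hxB; omega
        rw [hinter] at hkey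
        simp only [Nat.card_Ico, Finset.card_empty] at hkey
        have hmin : min (b - a) s = s := by omega
        rw [List.tail_cons] at hIH
        omega

theorem stmt7 {α : Type*} (T S : List α) (hS : S ≠ [])
    (hsub : ∃ i, occursAt T S i) :
    Cov T S = (∑ᶠ q ∈ OvOcc T S, (q.2 - q.1)) + nov T S * S.length := by
  classical
  set s := S.length with hsdef
  have hs : 1 ≤ s := List.length_pos_iff.mpr hS
  set F : Finset ℕ := (Finset.range T.length).filter (fun i => occursAt T S i) with hF
  have hmemF : ∀ i, i ∈ F ↔ occursAt T S i := by
    intro i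
    simp only [hF, Finset.mem_filter, Finset.mem_range]
    constructor
    · exact fun h => h.2
    · intro h
      have := occursAt_bound hS h
      exact ⟨by omega, h⟩
  set l := F.sort (· ≤ ·) with hldef
  have hlsort : l.Pairwise (· < ·) := F.sortedLT_sort.pairwise
  have hmeml : ∀ i, i ∈ l ↔ occursAt T S i := fun i => (Finset.mem_sort _).trans (hmemF i)
  have hlne : l ≠ [] := by
    obtain ⟨i, hi⟩ := hsub
    intro h
    have := (hmeml i).mpr hi
    simp [h] at this
  have hcons : ∀ i j, ConsOcc T S i j ↔ (i, j) ∈ l.zip l.tail := by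
    intro i j
    rw [mem_zip_tail_iff l hlsort]
    constructor
    · rintro ⟨h1, h2, h3, h4⟩
      exact ⟨(hmeml i).mpr h2, (hmeml j).mpr h3, h1,
        fun k hk h5 h6 => h4 k h5 h6 ((hmeml k).mp hk)⟩
    · rintro ⟨h1, h2, h3, h4⟩
      exact ⟨h3, (hmeml i).mp h1, (hmeml j).mp h2,
        fun k h5 h6 hk => h4 k ((hmeml k).mpr hk) h5 h6⟩
  set Z : Finset (ℕ × ℕ) := (l.zip l.tail).toFinset with hZdef
  have hZ : ∀ q : ℕ × ℕ, q ∈ Z ↔ ConsOcc T S q.1 q.2 := by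
    rintro ⟨i, j⟩
    rw [hZdef, List.mem_toFinset]
    exact (hcons i j).symm
  have hOv : OvOcc T S = ↑(Z.filter fun q => q.2 < q.1 + s) := by
    ext q
    simp only [OvOcc, Set.mem_setOf_eq, Finset.coe_filter, hZ q, ← hsdef]
  have hNov : NovOcc T S = ↑(Z.filter fun q => ¬ q.2 < q.1 + s) := by
    ext q
    simp only [NovOcc, Set.mem_setOf_eq, Finset.coe_filter, hZ q]
    constructor
    · rintro ⟨h1, h2⟩; exact ⟨h1, by omega⟩
    · rintro ⟨h1, h2⟩; exact ⟨h1, by omega⟩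
  -- Covered as a finset
  have hCovSet : Covered T S = ↑(F.biUnion fun i => Finset.Ico i (i + s)) := by
    ext x
    simp only [Covered, Set.mem_setOf_eq, Finset.coe_biUnion, Set.mem_iUnion,
      Finset.mem_coe, Finset.mem_Ico, hmemF]
    constructor
    · rintro ⟨i, h1, h2, h3⟩; exact ⟨i, h1, h2, h3⟩
    · rintro ⟨i, h1, h2, h3⟩; exact ⟨i, h1, h2, h3⟩
  have hFl : F = l.toFinset := (Finset.sort_toFinset _ _).symm
  have hCov : Cov T S = s + ((l.zip l.tail).map (fun q => min (q.2 - q.1) s)).sum := by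
    rw [Cov, hCovSet, Set.ncard_coe_finset, hFl]
    exact card_biUnion_sorted s hs l hlsort hlne
  -- nodup of the zip
  have hznd : (l.zip l.tail).Nodup := by
    have hlen : l.tail.length ≤ l.length := by simp [List.length_tail]
    have h2 : (l.zip l.tail).map Prod.snd = l.tail := List.map_snd_zip hlen
    have h3 : l.tail.Nodup := (Finset.sort_nodup _ _).tail
    exact List.Nodup.of_map Prod.snd (by rw [h2]; exact h3)
  have hsumZ : ∑ q ∈ Z, min (q.2 - q.1) s
      = ((l.zip l.tail).map (fun q => min (q.2 - q.1) s)).sum := by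
    rw [hZdef]
    exact List.sum_toFinset _ hznd
  -- split the sum
  have hsplit := Finset.sum_filter_add_sum_filter_not Z (fun q => q.2 < q.1 + s)
    (fun q => min (q.2 - q.1) s)
  have hov_eq : ∑ q ∈ Z.filter (fun q => q.2 < q.1 + s), min (q.2 - q.1) s
      = ∑ q ∈ Z.filter (fun q => q.2 < q.1 + s), (q.2 - q.1) := by
    apply Finset.sum_congr rfl
    intro q hq
    have := (Finset.mem_filter.mp hq).2
    omega
  have hnov_eq : ∑ q ∈ Z.filter (fun q => ¬ q.2 < q.1 + s), min (q.2 - q.1) s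
      = (Z.filter (fun q => ¬ q.2 < q.1 + s)).card * s := by
    rw [Finset.sum_congr rfl (fun q hq => ?_), Finset.sum_const, smul_eq_mul]
    have := (Finset.mem_filter.mp hq).2
    omega
  have hfin : ∑ᶠ q ∈ OvOcc T S, (q.2 - q.1)
      = ∑ q ∈ Z.filter (fun q => q.2 < q.1 + s), (q.2 - q.1) := by
    rw [hOv]
    exact finsum_mem_coe_finset _ _
  have hnovcard : nov T S = 1 + (Z.filter (fun q => ¬ q.2 < q.1 + s)).card := by
    rw [nov, hNov, Set.ncard_coe_finset]
  rw [hCov, hfin, hnovcard, ← hsumZ, ← hsplit, hov_eq, hnov_eq]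
  ring
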